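/- Alignment Theorem, concrete Markov form: Let (π,P) be unichain and let r* : S × A → ℝ. For a partial trajectory h = ([(s_0,a_0),…,(s_{T−1},a_{T−1})], z), let v(π,P,r*,γ)(h) = ∑_{t=0}^{T−1} γ^t r*(s_t,a_t) + γ^T V(π,P,r*,γ)(z) be the expected discounted return of the Markov lottery induced by (π,P) starting with h. Then for all partial trajectories h, h': the limit lim_{γ→1⁻} ( v(π,P,r*,γ)(h) − v(π,P,r*,γ)(h') ) exists, and this limit is ≥ 0 if and only if B(r̃,Ṽ)(h) ≥ B(r̃,Ṽ)(h'), where r̃ = r̃(π,P,r*) is the relative reward and Ṽ = Ṽ(π,P,r*) is the relative value function. -/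

import Mathlib

open Filter Finset Topology

noncomputable section

variable {S A : Type} [Fintype S] [DecidableEq S] [Fintype A] [Nonempty S] [Nonempty A]

/-- A policy assigns to each state a probability distribution over actions. -/
def IsPolicy (π : S → A → ℝ) : Prop :=
  (∀ s a, 0 ≤ π s a) ∧ ∀ s, ∑ a, π s a = 1

/-- A transition matrix assigns to each action and state a probability distribution
over next states. -/
def IsTransition (P : A → S → S → ℝ) : Prop :=
  (∀ a s s', 0 ≤ P a s s') ∧ ∀ a s, ∑ s', P a s s' = 1

/-- The state-transition matrix induced by a policy and a transition matrix. -/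
def Mmat (π : S → A → ℝ) (P : A → S → S → ℝ) : Matrix S S ℝ :=
  Matrix.of fun s s' => ∑ a, π s a * P a s s'

/-- Expected one-step reward under policy `π`. -/
def rpi (π : S → A → ℝ) (r : S × A → ℝ) (s : S) : ℝ := ∑ a, π s a * r (s, a)

/-- `(π, P)` is unichain with limiting distribution `μ`: for every `s'`, the Cesàro
averages of `(M(π,P)^t)(s,s')` converge to `μ s'`, independently of `s`. -/
def Unichain (π : S → A → ℝ) (P : A → S → S → ℝ) (μ : S → ℝ) : Prop :=
  ∀ s s', Tendsto (fun T : ℕ => (∑ t ∈ range T, (Mmat π P ^ t) s s') / (T : ℝ))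
    atTop (𝓝 (μ s'))

/-- Discounted value function. -/
def Vval (π : S → A → ℝ) (P : A → S → S → ℝ) (r : S × A → ℝ) (γ : ℝ) (s : S) : ℝ :=
  ∑' t : ℕ, γ ^ t * ((Mmat π P ^ t).mulVec (rpi π r)) s

/-- The bootstrapped return of a partial trajectory `h = (pairs, z)`. -/
def Breturn (r : S × A → ℝ) (V : S → ℝ) (h : List (S × A) × S) : ℝ :=
  (h.1.map r).sum + V h.2

section helpers
set_option linter.unusedSectionVars false

lemma Mpow_nonneg (π : S → A → ℝ) (P : A → S → S → ℝ)
    (hπ : IsPolicy π) (hP : IsTransition P) (k : ℕ) (s s' : S) :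
    0 ≤ ((Mmat π P) ^ k) s s' := by
  induction k generalizing s s' with
  | zero =>
    simp only [pow_zero, Matrix.one_apply]
    split <;> norm_num
  | succ n ih =>
    rw [pow_succ, Matrix.mul_apply]
    refine Finset.sum_nonneg fun j _ => mul_nonneg (ih s j) ?_
    exact Finset.sum_nonneg fun a _ => mul_nonneg (hπ.1 j a) (hP.1 a j s')

lemma Mpow_row (π : S → A → ℝ) (P : A → S → S → ℝ)
    (hπ : IsPolicy π) (hP : IsTransition P) (k : ℕ) (s : S) :
    ∑ s', ((Mmat π P) ^ k) s s' = 1 := by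
  induction k generalizing s with
  | zero => simp [Matrix.one_apply]
  | succ n ih =>
    simp only [pow_succ, Matrix.mul_apply]
    rw [Finset.sum_comm]
    have : ∀ j : S, ∑ s', ((Mmat π P) ^ n) s j * (Mmat π P) j s'
        = ((Mmat π P) ^ n) s j := by
      intro j
      rw [← Finset.mul_sum]
      have hrow : ∑ s', (Mmat π P) j s' = 1 := by
        simp only [Mmat, Matrix.of_apply]
        rw [Finset.sum_comm]
        simp_rw [← Finset.mul_sum, hP.2, mul_one]
        exact hπ.2 j
      rw [hrow, mul_one]
    simp_rw [this]
    exact ih s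

lemma summable_aux (π : S → A → ℝ) (P : A → S → S → ℝ)
    (hπ : IsPolicy π) (hP : IsTransition P) (f : S → ℝ) {γ : ℝ}
    (h0 : 0 ≤ γ) (h1 : γ < 1) (s : S) :
    Summable (fun k : ℕ => γ ^ k * ((Mmat π P ^ k).mulVec f) s) := by
  refine Summable.of_norm_bounded (g := fun k => γ ^ k * ∑ s', |f s'|)
    ((summable_geometric_of_lt_one h0 h1).mul_right _) ?_
  intro k
  rw [norm_mul, Real.norm_eq_abs, Real.norm_eq_abs, abs_pow, abs_of_nonneg h0]
  refine mul_le_mul_of_nonneg_left ?_ (pow_nonneg h0 k)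
  rw [Matrix.mulVec, dotProduct]
  refine (Finset.abs_sum_le_sum_abs _ _).trans (Finset.sum_le_sum fun s' _ => ?_)
  rw [abs_mul, abs_of_nonneg (Mpow_nonneg π P hπ hP k s s')]
  calc ((Mmat π P) ^ k) s s' * |f s'| ≤ 1 * |f s'| := by
        refine mul_le_mul_of_nonneg_right ?_ (abs_nonneg _)
        calc ((Mmat π P) ^ k) s s'
            ≤ ∑ s'', ((Mmat π P) ^ k) s s'' :=
              Finset.single_le_sum (fun i _ => Mpow_nonneg π P hπ hP k s i) (mem_univ s')
          _ = 1 := Mpow_row π P hπ hP k s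
    _ = |f s'| := one_mul _

lemma Vval_split (π : S → A → ℝ) (P : A → S → S → ℝ)
    (hπ : IsPolicy π) (hP : IsTransition P) (rstar : S × A → ℝ) (rb : ℝ) {γ : ℝ}
    (h0 : 0 ≤ γ) (h1 : γ < 1) (z : S) :
    Vval π P rstar γ z
      = (∑' k : ℕ, γ ^ k * ((Mmat π P ^ k).mulVec (fun s' => rpi π rstar s' - rb)) z)
        + rb * (1 - γ)⁻¹ := by
  have key : ∀ k : ℕ, γ ^ k * ((Mmat π P ^ k).mulVec (rpi π rstar)) z
      = γ ^ k * ((Mmat π P ^ k).mulVec (fun s' => rpi π rstar s' - rb)) z + rb * γ ^ k := by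
    intro k
    have : ((Mmat π P ^ k).mulVec (rpi π rstar)) z
        = ((Mmat π P ^ k).mulVec (fun s' => rpi π rstar s' - rb)) z + rb := by
      simp only [Matrix.mulVec, dotProduct, mul_sub, Finset.sum_sub_distrib,
        ← Finset.sum_mul, Mpow_row π P hπ hP k z]
      ring
    rw [this]; ring
  rw [Vval]
  simp_rw [key]
  rw [Summable.tsum_add (summable_aux π P hπ hP _ h0 h1 z)
    ((summable_geometric_of_lt_one h0 h1).mul_left rb)]
  congr 1
  rw [tsum_mul_left, tsum_geometric_of_lt_one h0 h1]

end helpers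

/-- **Alignment Theorem, concrete Markov form.** For all partial trajectories `h, h'`,
the limit `lim_{γ→1⁻} ( v(π,P,r*,γ)(h) − v(π,P,r*,γ)(h') )` exists, and this limit is
`≥ 0` if and only if `B(r̃,Ṽ)(h) ≥ B(r̃,Ṽ)(h')`, where `r̃` is the relative reward and `Ṽ`
the relative value function of `(π,P,r*)`. -/
theorem alignment_concrete_markov_form
    (π : S → A → ℝ) (P : A → S → S → ℝ)
    (hπ : IsPolicy π) (hP : IsTransition P)
    (μ : S → ℝ) (huni : Unichain π P μ)
    (rstar : S × A → ℝ)
    (Vrel : S → ℝ)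
    (hVrel : ∀ s : S, Tendsto
      (fun γ : ℝ => ∑' k : ℕ, γ ^ k *
        ((Mmat π P ^ k).mulVec (fun s' => rpi π rstar s' - ∑ s'', μ s'' * rpi π rstar s'')) s)
      (𝓝[<] (1 : ℝ)) (𝓝 (Vrel s)))
    (h h' : List (S × A) × S) :
    ∃ c : ℝ,
      Tendsto
        (fun γ : ℝ =>
          ((∑ t : Fin h.1.length, γ ^ (t : ℕ) * rstar (h.1.get t))
              + γ ^ h.1.length * Vval π P rstar γ h.2)
            - ((∑ t : Fin h'.1.length, γ ^ (t : ℕ) * rstar (h'.1.get t))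
              + γ ^ h'.1.length * Vval π P rstar γ h'.2))
        (𝓝[<] (1 : ℝ)) (𝓝 c) ∧
      (0 ≤ c ↔
        Breturn (fun p => rstar p - ∑ s'', μ s'' * rpi π rstar s'') Vrel h'
          ≤ Breturn (fun p => rstar p - ∑ s'', μ s'' * rpi π rstar s'') Vrel h) := by
  classical
  set rb : ℝ := ∑ s'', μ s'' * rpi π rstar s'' with hrb
  have limG : ∀ hh : List (S × A) × S, Tendsto
      (fun γ : ℝ => (∑ t : Fin hh.1.length, γ ^ (t : ℕ) * (rstar (hh.1.get t) - rb))
        + γ ^ hh.1.length *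
          ∑' k : ℕ, γ ^ k * ((Mmat π P ^ k).mulVec (fun s' => rpi π rstar s' - rb)) hh.2)
      (𝓝[<] (1 : ℝ)) (𝓝 (Breturn (fun p => rstar p - rb) Vrel hh)) := by
    intro hh
    have h1 : Tendsto
        (fun γ : ℝ => ∑ t : Fin hh.1.length, γ ^ (t : ℕ) * (rstar (hh.1.get t) - rb))
        (𝓝[<] (1 : ℝ)) (𝓝 ((hh.1.map rstar).sum - hh.1.length * rb)) := by
      have hc : Continuous
          (fun γ : ℝ => ∑ t : Fin hh.1.length, γ ^ (t : ℕ) * (rstar (hh.1.get t) - rb)) := by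
        exact continuous_finset_sum _ fun t _ => (continuous_pow _).mul continuous_const
      have := (hc.tendsto 1).mono_left (nhdsWithin_le_nhds (s := Set.Iio (1 : ℝ)))
      simpa using this
    have hp : Tendsto (fun γ : ℝ => γ ^ hh.1.length) (𝓝[<] (1 : ℝ)) (𝓝 1) := by
      simpa using ((continuous_pow hh.1.length).tendsto (1 : ℝ)).mono_left
        (nhdsWithin_le_nhds (s := Set.Iio (1 : ℝ)))
    have h2 := hp.mul (hVrel hh.2)
    rw [one_mul] at h2
    have hsum : (hh.1.map (fun p => rstar p - rb)).sum
        = (hh.1.map rstar).sum - hh.1.length * rb := by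
      induction hh.1 with
      | nil => simp
      | cons a l ih => simp [ih]; ring
    simpa [Breturn, hsum] using h1.add h2
  refine ⟨Breturn (fun p => rstar p - rb) Vrel h - Breturn (fun p => rstar p - rb) Vrel h',
    ?_, ?_⟩
  · refine Tendsto.congr' ?_ ((limG h).sub (limG h'))
    filter_upwards [Ioo_mem_nhdsLT_of_mem
      (⟨zero_lt_one, le_refl (1 : ℝ)⟩ : (1 : ℝ) ∈ Set.Ioc 0 1)] with γ hγ
    obtain ⟨hγ0, hγ1⟩ := hγ
    have key : ∀ hh : List (S × A) × S,
        ((∑ t : Fin hh.1.length, γ ^ (t : ℕ) * (rstar (hh.1.get t) - rb))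
          + γ ^ hh.1.length *
            ∑' k : ℕ, γ ^ k * ((Mmat π P ^ k).mulVec (fun s' => rpi π rstar s' - rb)) hh.2)
          + rb * (1 - γ)⁻¹
        = (∑ t : Fin hh.1.length, γ ^ (t : ℕ) * rstar (hh.1.get t))
            + γ ^ hh.1.length * Vval π P rstar γ hh.2 := by
      intro hh
      rw [Vval_split π P hπ hP rstar rb hγ0.le hγ1 hh.2]
      have hg : ∑ t : Fin hh.1.length, γ ^ (t : ℕ) * rb
          = rb * ((γ ^ hh.1.length - 1) / (γ - 1)) := by
        rw [Fin.sum_univ_eq_sum_range (fun t => γ ^ t * rb), ← Finset.sum_mul,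
          geom_sum_eq (ne_of_lt hγ1)]
        ring
      have hne : γ - 1 ≠ 0 := sub_ne_zero.mpr (ne_of_lt hγ1)
      have hne' : (1 : ℝ) - γ ≠ 0 := sub_ne_zero.mpr (ne_of_gt hγ1)
      simp only [mul_sub, Finset.sum_sub_distrib, hg]
      field_simp
      ring
    rw [← key h, ← key h']
    ring
  · exact sub_nonneg
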